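/- For H ∈ (0,1/2], K ∈ (1,2), and all t ≥ s ≥ 0: (1/2^K)((2t^(2H))^K + (2s^(2H))^K - 2((t^(2H)+s^(2H))^K - (t-s)^(2HK))) ≤ (t-s)^(2HK). -/

import Mathlib

open Real

/-- Subadditivity of `x ^ p` for `0 ≤ p ≤ 1` on nonnegative reals. -/
lemma real_rpow_add_le_add_rpow {p a b : ℝ} (ha : 0 ≤ a) (hb : 0 ≤ b)
    (hp : 0 ≤ p) (hp1 : p ≤ 1) : (a + b) ^ p ≤ a ^ p + b ^ p := by
  have h := NNReal.rpow_add_le_add_rpow ⟨a, ha⟩ ⟨b, hb⟩ hp hp1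
  have := NNReal.coe_le_coe.2 h
  push_cast at this
  convert this using 2 <;> rfl

/-- Midpoint concavity of `x ^ α` for `0 < α < 1`. -/
lemma rpow_midpoint {α A B : ℝ} (hA : 0 ≤ A) (hB : 0 ≤ B) (h0 : 0 < α) (h1 : α < 1) :
    A ^ α + B ^ α ≤ 2 * ((A + B) / 2) ^ α := by
  have hc := (Real.strictConcaveOn_rpow h0 h1).concaveOn
  have := hc.2 (Set.mem_Ici.2 hA) (Set.mem_Ici.2 hB)
    (by norm_num : (0:ℝ) ≤ 1/2) (by norm_num : (0:ℝ) ≤ 1/2) (by norm_num)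
  simp only [smul_eq_mul] at this
  have h2 : (1/2 : ℝ) * A + (1/2) * B = (A + B) / 2 := by ring
  rw [h2] at this
  linarith

/-- Key inequality: for `y, c ≥ 0` and `1 < K < 2`,
`(y+c)^K + y^K ≤ 2^(1-K) * (2y+c)^K + (1 - 2^(1-K)) * c^K`. -/
lemma key_ineq {K : ℝ} (hK1 : 1 < K) (hK2 : K < 2) {y c : ℝ} (hy : 0 ≤ y) (hc : 0 ≤ c) :
    (y + c) ^ K + y ^ K ≤ (2:ℝ) ^ (1 - K) * (2 * y + c) ^ K + (1 - (2:ℝ) ^ (1 - K)) * c ^ K := by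
  set f : ℝ → ℝ := fun x =>
    (2:ℝ) ^ (1 - K) * (2 * x + c) ^ K + (1 - (2:ℝ) ^ (1 - K)) * c ^ K - (x + c) ^ K - x ^ K
    with hf
  have hK0 : (0:ℝ) < K := by linarith
  -- f 0 = 0
  have hf0 : f 0 = 0 := by
    simp only [hf]
    rw [Real.zero_rpow (ne_of_gt hK0)]
    ring_nf
  -- differentiability
  have hderiv : ∀ x : ℝ, HasDerivAt f
      ((2:ℝ) ^ (1 - K) * (K * (2 * x + c) ^ (K - 1) * 2)
        - K * (x + c) ^ (K - 1) - K * x ^ (K - 1)) x := by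
    intro x
    have h1 : HasDerivAt (fun x : ℝ => (2 * x + c) ^ K)
        (K * (2 * x + c) ^ (K - 1) * 2) x := by
      have hin : HasDerivAt (fun x : ℝ => 2 * x + c) 2 x := by
        simpa using ((hasDerivAt_id x).const_mul (2:ℝ)).add_const c
      exact (Real.hasDerivAt_rpow_const (Or.inr hK1.le)).comp x hin
    have h2 : HasDerivAt (fun x : ℝ => (x + c) ^ K) (K * (x + c) ^ (K - 1)) x := by
      have hin : HasDerivAt (fun x : ℝ => x + c) 1 x := (hasDerivAt_id x).add_const c
      simpa [Function.comp_def] using (Real.hasDerivAt_rpow_const (Or.inr hK1.le)).comp x hin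
    have h3 : HasDerivAt (fun x : ℝ => x ^ K) (K * x ^ (K - 1)) x :=
      Real.hasDerivAt_rpow_const (Or.inr hK1.le)
    exact (((h1.const_mul ((2:ℝ) ^ (1 - K))).add_const
      ((1 - (2:ℝ) ^ (1 - K)) * c ^ K)).sub h2).sub h3
  -- derivative is nonneg on interior
  have hderiv_nonneg : ∀ x ∈ Set.Ioi (0:ℝ),
      0 ≤ (2:ℝ) ^ (1 - K) * (K * (2 * x + c) ^ (K - 1) * 2)
        - K * (x + c) ^ (K - 1) - K * x ^ (K - 1) := by
    intro x hx
    have hx0 : 0 < x := hx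
    have hmid := rpow_midpoint (by linarith : (0:ℝ) ≤ x + c) hx0.le
      (by linarith : (0:ℝ) < K - 1) (by linarith : K - 1 < 1)
    have h2c : ((x + c + x) / 2 : ℝ) = (2 * x + c) / 2 := by ring
    rw [h2c] at hmid
    have hdivpow : ((2 * x + c) / 2 : ℝ) ^ (K - 1)
        = (2 * x + c) ^ (K - 1) / (2:ℝ) ^ (K - 1) :=
      Real.div_rpow (by linarith) (by norm_num) (K - 1)
    rw [hdivpow] at hmid
    have h2pos : (0:ℝ) < (2:ℝ) ^ (K - 1) := Real.rpow_pos_of_pos (by norm_num) _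
    have hmul : (2:ℝ) ^ (1 - K) * (2:ℝ) ^ (K - 1) = 1 := by
      rw [← Real.rpow_add (by norm_num : (0:ℝ) < 2)]; norm_num
    -- 2^(1-K) * (2x+c)^(K-1) = (2x+c)^(K-1) / 2^(K-1)
    have hinv : (2:ℝ) ^ (1 - K) = ((2:ℝ) ^ (K - 1))⁻¹ := by
      rw [← Real.rpow_neg (by norm_num : (0:ℝ) ≤ 2)]
      norm_num
    have heq : (2:ℝ) ^ (1 - K) * (2 * x + c) ^ (K - 1)
        = (2 * x + c) ^ (K - 1) / (2:ℝ) ^ (K - 1) := by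
      rw [hinv, inv_mul_eq_div]
    have hKmid := mul_le_mul_of_nonneg_left hmid hK0.le
    nlinarith [hKmid, heq, hK0]
  -- f is monotone on Ici 0
  have hdiff : Differentiable ℝ f := fun x => (hderiv x).differentiableAt
  have hmono : MonotoneOn f (Set.Ici 0) := by
    apply monotoneOn_of_deriv_nonneg (convex_Ici 0) hdiff.continuous.continuousOn
      (hdiff.differentiableOn.mono interior_subset)
    intro x hx
    rw [interior_Ici] at hx
    rw [(hderiv x).deriv]
    exact hderiv_nonneg x hx
  have := hmono (Set.self_mem_Ici) (Set.mem_Ici.2 hy) hy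
  rw [hf0] at this
  simp only [hf] at this
  linarith

theorem stmt_3 (H K : ℝ) (hH : H ∈ Set.Ioc (0:ℝ) (1/2)) (hK : K ∈ Set.Ioo (1:ℝ) 2)
    (s t : ℝ) (hs : 0 ≤ s) (hst : s ≤ t) :
    (1 / (2:ℝ) ^ K) * ((2 * t ^ (2*H)) ^ K + (2 * s ^ (2*H)) ^ K
        - 2 * ((t ^ (2*H) + s ^ (2*H)) ^ K - (t - s) ^ (2*H*K)))
      ≤ (t - s) ^ (2*H*K) := by
  obtain ⟨hH0, hH2⟩ := hH
  obtain ⟨hK1, hK2⟩ := hK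
  have ht : 0 ≤ t := le_trans hs hst
  set a := t ^ (2*H) with ha
  set b := s ^ (2*H) with hb
  have ha0 : 0 ≤ a := Real.rpow_nonneg ht _
  have hb0 : 0 ≤ b := Real.rpow_nonneg hs _
  have hba : b ≤ a := Real.rpow_le_rpow hs hst (by linarith)
  set d := (t - s) ^ (2*H*K) with hd
  -- a - b ≤ (t-s)^(2H) by subadditivity
  have hsub : a ≤ (t - s) ^ (2*H) + b := by
    have := real_rpow_add_le_add_rpow (by linarith : (0:ℝ) ≤ t - s) hs
      (by linarith : (0:ℝ) ≤ 2*H) (by linarith : 2*H ≤ 1)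
    simpa [ha, hb, sub_add_cancel] using this
  -- (a - b)^K ≤ d
  have habd : (a - b) ^ K ≤ d := by
    have h1 : (a - b) ^ K ≤ ((t - s) ^ (2*H)) ^ K :=
      Real.rpow_le_rpow (by linarith) (by linarith) (by linarith)
    have h2 : ((t - s) ^ (2*H)) ^ K = (t - s) ^ (2*H*K) :=
      (Real.rpow_mul (by linarith) (2*H) K).symm
    rw [h2] at h1
    exact h1
  -- key inequality with y = b, c = a - b
  have hkey := key_ineq hK1 hK2 hb0 (by linarith : (0:ℝ) ≤ a - b)
  have hrw : b + (a - b) = a := by ring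
  have hrw2 : 2 * b + (a - b) = a + b := by ring
  rw [hrw, hrw2] at hkey
  -- coefficients
  have hcoef : (2:ℝ) ^ (1 - K) ≤ 1 := by
    have : (2:ℝ) ^ (1 - K) ≤ (2:ℝ) ^ (0:ℝ) :=
      Real.rpow_le_rpow_of_exponent_le (by norm_num) (by linarith)
    simpa using this
  have hkey2 : a ^ K + b ^ K ≤ (2:ℝ) ^ (1 - K) * (a + b) ^ K + (1 - (2:ℝ) ^ (1 - K)) * d := by
    have := mul_le_mul_of_nonneg_left habd (by linarith : (0:ℝ) ≤ 1 - (2:ℝ) ^ (1 - K))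
    linarith
  -- rewrite the goal
  have h2K : (0:ℝ) < (2:ℝ) ^ K := Real.rpow_pos_of_pos (by norm_num) _
  have hmulrpow : ∀ x : ℝ, 0 ≤ x → (2 * x) ^ K = (2:ℝ) ^ K * x ^ K := fun x hx =>
    Real.mul_rpow (by norm_num) hx
  rw [hmulrpow a ha0, hmulrpow b hb0]
  rw [div_mul_eq_mul_div, div_le_iff₀ h2K]
  have h1K : (2:ℝ) ^ (1 - K) * (2:ℝ) ^ K = 2 := by
    rw [← Real.rpow_add (by norm_num : (0:ℝ) < 2)]; norm_num
  have hfin := mul_le_mul_of_nonneg_left hkey2 h2K.le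
  have e1 : (2:ℝ) ^ K * ((2:ℝ) ^ (1 - K) * (a + b) ^ K) = 2 * (a + b) ^ K := by
    rw [← mul_assoc, mul_comm ((2:ℝ) ^ K) _, h1K]
  have e2 : (2:ℝ) ^ K * ((2:ℝ) ^ (1 - K) * d) = 2 * d := by
    rw [← mul_assoc, mul_comm ((2:ℝ) ^ K) _, h1K]
  nlinarith [hfin, e1, e2]
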